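/- Let (X, dist) be a metric space, μ a Borel probability measure on X, s ∈ X, and d ≥ 1 a real number. Assume μ(B(s,1)) = 1 and the doubling condition at s: for every r > 0 and every ε ∈ (0,1], μ(B(s,r)) ≤ (1/ε)^d · μ(B(s, ε·r)). Then for every positive integer m and every natural number i, the probability under the m-fold product measure μ^m that all of the m independent sample points X₁, …, X_m satisfy dist(s, X_j) > 2^(−i) (equivalently, that min_{1 ≤ j ≤ m} dist(s, X_j) > 2^(−i)) is at most (1 − 2^(−i·d))^m. -/
import Mathlib


open MeasureTheory Metric Real

/-- Under the doubling condition with exponent `d ≥ 1` at `s` and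
`μ (ball s 1) = 1`, for every positive `m` and every `i : ℕ`, the probability
(under the product measure `μ^m`) that all `m` independent samples are at distance
greater than `2 ^ (-i)` from `s` is at most `(1 - 2 ^ (-i * d)) ^ m`. -/
theorem prob_all_far_le {X : Type*} [MetricSpace X] [MeasurableSpace X] [BorelSpace X]
    (μ : Measure X) [IsProbabilityMeasure μ] (s : X) (d : ℝ) (hd : 1 ≤ d)
    (h1 : μ (ball s 1) = 1)
    (hdbl : ∀ r : ℝ, 0 < r → ∀ ε : ℝ, 0 < ε → ε ≤ 1 →
      μ (ball s r) ≤ ENNReal.ofReal ((1 / ε) ^ d) * μ (ball s (ε * r))) :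
    ∀ m : ℕ, 0 < m → ∀ i : ℕ,
      (Measure.pi fun _ : Fin m => μ)
          {x : Fin m → X | ∀ j : Fin m, (2 : ℝ) ^ (-(i : ℝ)) < dist s (x j)}
        ≤ ENNReal.ofReal ((1 - (2 : ℝ) ^ (-(i : ℝ) * d)) ^ m) := by
  intro m hm i
  set r : ℝ := (2 : ℝ) ^ (-(i : ℝ)) with hrdef
  set a : ℝ := (2 : ℝ) ^ (-(i : ℝ) * d) with hadef
  have hrpos : 0 < r := Real.rpow_pos_of_pos two_pos _
  have hr1 : r ≤ 1 :=
    Real.rpow_le_one_of_one_le_of_nonpos one_le_two (neg_nonpos.mpr (Nat.cast_nonneg i))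
  have hapos : 0 < a := Real.rpow_pos_of_pos two_pos _
  have ha1 : a ≤ 1 :=
    Real.rpow_le_one_of_one_le_of_nonpos one_le_two
      (mul_nonpos_iff.mpr (Or.inr ⟨neg_nonpos.mpr (Nat.cast_nonneg i),
        le_trans zero_le_one hd⟩))
  have hra : r ^ d = a := by
    rw [hrdef, hadef, ← Real.rpow_mul (by norm_num : (0:ℝ) ≤ 2)]
  have hball : ENNReal.ofReal a ≤ μ (ball s r) := by
    have h := hdbl 1 one_pos r hrpos hr1
    rw [mul_one, h1] at h
    have hc : a * (1 / r) ^ d = 1 := by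
      rw [one_div, Real.inv_rpow hrpos.le, hra]
      exact mul_inv_cancel₀ (ne_of_gt hapos)
    calc ENNReal.ofReal a = ENNReal.ofReal a * 1 := (mul_one _).symm
      _ ≤ ENNReal.ofReal a * (ENNReal.ofReal ((1 / r) ^ d) * μ (ball s r)) :=
          mul_le_mul_right h _
      _ = ENNReal.ofReal (a * (1 / r) ^ d) * μ (ball s r) := by
          rw [ENNReal.ofReal_mul hapos.le, mul_assoc]
      _ = μ (ball s r) := by rw [hc]; simp
  have hcompl : μ {y : X | r < dist s y} ≤ ENNReal.ofReal (1 - a) := by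
    have hsub : {y : X | r < dist s y} ⊆ (ball s r)ᶜ := by
      intro y hy
      simp only [Set.mem_compl_iff, mem_ball, not_lt]
      rw [dist_comm]
      exact le_of_lt hy
    calc μ {y : X | r < dist s y} ≤ μ (ball s r)ᶜ := measure_mono hsub
      _ = 1 - μ (ball s r) := by
          rw [measure_compl measurableSet_ball (measure_ne_top μ _), measure_univ]
      _ ≤ 1 - ENNReal.ofReal a := tsub_le_tsub_left hball 1
      _ = ENNReal.ofReal (1 - a) := by
          rw [ENNReal.ofReal_sub 1 hapos.le, ENNReal.ofReal_one]
  have hset : {x : Fin m → X | ∀ j : Fin m, r < dist s (x j)} =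
      Set.pi Set.univ (fun _ : Fin m => {y : X | r < dist s y}) := by
    ext x; simp [Set.mem_pi]
  rw [hset, Measure.pi_pi]
  calc ∏ _j : Fin m, μ {y : X | r < dist s y}
      ≤ ∏ _j : Fin m, ENNReal.ofReal (1 - a) :=
        Finset.prod_le_prod' (fun _ _ => hcompl)
    _ = ENNReal.ofReal (1 - a) ^ m := by simp
    _ = ENNReal.ofReal ((1 - a) ^ m) := (ENNReal.ofReal_pow (by linarith) m).symm
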